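/- The VarGrad estimator ĝ_VarGrad = (S−1)^{-1}(Σ_{s=1}^S f(z^(s)) ∇_φ log q_φ(z^(s)) − f̄ Σ_{s=1}^S ∇_φ log q_φ(z^(s))), with f̄ = S^{-1} Σ_s f(z^(s)) and z^(s) i.i.d. ~ q_φ, is an unbiased estimator of E_{q_φ}[f(z) ∇_φ log q_φ(z)]: its expectation equals E_{q_φ}[f ∇_φ log q_φ] using E_{q_φ}[∇_φ log q_φ] = 0 and independence of distinct samples. -/

import Mathlib

open MeasureTheory

/-- Unbiasedness of VarGrad: for `S ≥ 2` i.i.d. samples `z⁽ˢ⁾ ∼ ν` (product measure on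
`Fin S → α`), a fixed function `f` and score `sc` with `E_ν[sc] = 0`, the expectation of
`ĝ_VarGrad = (S−1)⁻¹ (∑ₛ f(z⁽ˢ⁾) sc(z⁽ˢ⁾) − f̄ ∑ₛ sc(z⁽ˢ⁾))` equals `E_ν[f·sc]`. -/
theorem vargrad_unbiased {α : Type*} [MeasurableSpace α]
    (ν : Measure α) [IsProbabilityMeasure ν] (f sc : α → ℝ) (S : ℕ) (hS : 2 ≤ S)
    (hf : MemLp f 2 ν) (hsc : MemLp sc 2 ν)
    (hsc0 : ∫ z, sc z ∂ν = 0) :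
    ∫ ω : Fin S → α, ((S : ℝ) - 1)⁻¹ *
        ((∑ s, f (ω s) * sc (ω s))
          - ((S : ℝ)⁻¹ * ∑ s, f (ω s)) * ∑ s, sc (ω s))
      ∂(Measure.pi fun _ : Fin S => ν)
    = ∫ z, f z * sc z ∂ν := by
  classical
  letI : MeasureSpace α := ⟨ν⟩
  have hνvol : (volume : Measure α) = ν := rfl
  have hfsc : Integrable (fun x => f x * sc x) ν := by
    have h : MemLp (f • sc) 1 ν := by
      exact MemLp.smul (φ := f) hsc hf
    have := h.integrable le_rfl
    exact this
  have hfi : Integrable f ν := hf.integrable (by norm_num)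
  have hsci : Integrable sc ν := hsc.integrable (by norm_num)
  set A := ∫ z, f z * sc z ∂ν with hA
  set g : Fin S → Fin S → Fin S → α → ℝ := fun s t i x =>
    (if i = s then f x else 1) * (if i = t then sc x else 1) with hg
  have hgint : ∀ s t i, Integrable (g s t i) ν := by
    intro s t i
    simp only [hg]
    by_cases h1 : i = s
    · subst h1
      by_cases h2 : i = t
      · subst h2
        simpa using hfsc
      · simpa [h2] using hfi
    · by_cases h2 : i = t
      · subst h2
        simpa [h1] using hsci
      · simp [h1, h2]
  have hprod : ∀ s t (ω : Fin S → α), f (ω s) * sc (ω t) = ∏ i, g s t i (ω i) := by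
    intro s t ω
    simp only [hg]
    rw [Finset.prod_mul_distrib, Finset.prod_ite_eq' Finset.univ s fun i => f (ω i),
      Finset.prod_ite_eq' Finset.univ t fun i => sc (ω i)]
    simp
  have hpi : (Measure.pi fun _ : Fin S => ν) = (volume : Measure (Fin S → α)) :=
    (MeasureTheory.volume_pi).symm
  have hint2 : ∀ s t, Integrable (fun ω : Fin S → α => f (ω s) * sc (ω t))
      (Measure.pi fun _ : Fin S => ν) := by
    intro s t
    have h := MeasureTheory.Integrable.fintype_prod (f := g s t) (fun i => hgint s t i)
    simpa [← hprod s t] using h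
  have key : ∀ s t, (∫ ω : Fin S → α, f (ω s) * sc (ω t) ∂(Measure.pi fun _ : Fin S => ν))
      = if s = t then A else 0 := by
    intro s t
    simp_rw [hprod s t]
    rw [MeasureTheory.integral_fintype_prod_eq_prod (f := g s t), ← hνvol]
    by_cases hst : s = t
    · subst hst
      rw [if_pos rfl]
      have hgi : ∀ i, (∫ x, g s s i x ∂(volume : Measure α)) = if i = s then A else 1 := by
        intro i
        by_cases h : i = s <;> simp [hg, h, hνvol, hA]
      rw [Finset.prod_congr rfl fun i _ => hgi i,
        Finset.prod_ite_eq' Finset.univ s fun _ => A]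
      simp
    · rw [if_neg hst]
      refine Finset.prod_eq_zero (Finset.mem_univ t) ?_
      have hts : t ≠ s := fun h => hst h.symm
      have : g s t t = sc := by
        funext x
        simp [hg, hts]
      rw [this, hνvol, hsc0]
  -- rewrite the integrand
  have hrw : ∀ ω : Fin S → α,
      ((S : ℝ) - 1)⁻¹ * ((∑ s, f (ω s) * sc (ω s))
          - ((S : ℝ)⁻¹ * ∑ s, f (ω s)) * ∑ s, sc (ω s))
      = ((S : ℝ) - 1)⁻¹ * ((∑ s, f (ω s) * sc (ω s))
          - (S : ℝ)⁻¹ * ∑ s, ∑ t, f (ω s) * sc (ω t)) := by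
    intro ω
    rw [mul_assoc, Finset.sum_mul_sum]
  have hT1 : Integrable (fun ω : Fin S → α => ∑ s, f (ω s) * sc (ω s))
      (Measure.pi fun _ : Fin S => ν) := integrable_finset_sum _ fun s _ => hint2 s s
  have hD : Integrable (fun ω : Fin S → α => ∑ s, ∑ t, f (ω s) * sc (ω t))
      (Measure.pi fun _ : Fin S => ν) :=
    integrable_finset_sum _ fun s _ => integrable_finset_sum _ fun t _ => hint2 s t
  calc ∫ ω : Fin S → α, ((S : ℝ) - 1)⁻¹ *
        ((∑ s, f (ω s) * sc (ω s))
          - ((S : ℝ)⁻¹ * ∑ s, f (ω s)) * ∑ s, sc (ω s))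
      ∂(Measure.pi fun _ : Fin S => ν)
      = ∫ ω : Fin S → α, ((S : ℝ) - 1)⁻¹ * ((∑ s, f (ω s) * sc (ω s))
          - (S : ℝ)⁻¹ * ∑ s, ∑ t, f (ω s) * sc (ω t))
        ∂(Measure.pi fun _ : Fin S => ν) := by
        exact integral_congr_ae (Filter.Eventually.of_forall hrw)
    _ = ((S : ℝ) - 1)⁻¹ * ((∫ ω : Fin S → α, ∑ s, f (ω s) * sc (ω s)
            ∂(Measure.pi fun _ : Fin S => ν))
          - (S : ℝ)⁻¹ * ∫ ω : Fin S → α, ∑ s, ∑ t, f (ω s) * sc (ω t)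
            ∂(Measure.pi fun _ : Fin S => ν)) := by
        rw [integral_const_mul, integral_sub hT1 (hD.const_mul _), integral_const_mul]
    _ = ((S : ℝ) - 1)⁻¹ * ((S : ℝ) * A - (S : ℝ)⁻¹ * ((S : ℝ) * A)) := by
        congr 1
        have h1 : (∫ ω : Fin S → α, ∑ s, f (ω s) * sc (ω s)
            ∂(Measure.pi fun _ : Fin S => ν)) = (S : ℝ) * A := by
          rw [integral_finset_sum _ fun s _ => hint2 s s]
          simp [key, mul_comm]
        have h2 : (∫ ω : Fin S → α, ∑ s, ∑ t, f (ω s) * sc (ω t)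
            ∂(Measure.pi fun _ : Fin S => ν)) = (S : ℝ) * A := by
          rw [integral_finset_sum _ fun s _ => integrable_finset_sum _ fun t _ => hint2 s t]
          simp_rw [integral_finset_sum _ fun t _ => hint2 _ t, key]
          simp [mul_comm]
        rw [h1, h2]
    _ = A := by
        have h2S : (2:ℝ) ≤ (S:ℝ) := by exact_mod_cast hS
        have hS0 : (S : ℝ) ≠ 0 := by linarith
        have hS1 : (S : ℝ) - 1 ≠ 0 := by linarith
        field_simp
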